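/- Let g be a unitary automorphism of an n-dimensional hermitian space (V, h) over (E, σ), let v ∈ V be such that v, g v, …, g^{n−1} v form an E-basis of V, and let L be the O-span of v, g v, …, g^{n−1} v; assume g L = L. Then the dual lattice L* satisfies g L* = L*, and L* is again g-cyclic: L* is the O-span of v′, g v′, …, g^{n−1} v′, where v′ is the unique vector with h(v, v′) = 1 and h(g^i v, v′) = 0 for 1 ≤ i ≤ n−1 (the 0-th vector of the basis dual to (v, g v, …, g^{n−1} v)). -/

import Mathlib

/-- If `g` is a unitary automorphism of a hermitian space `(V, h)` over `(E, σ)`,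
`v, g v, …, g^{n−1} v` is an `E`-basis of `V`, `L` is the `O`-span of this basis, and `g L = L`,
then the dual lattice `L*` satisfies `g L* = L*` and `L*` is the `O`-span of
`v', g v', …, g^{n−1} v'` where `v'` is the unique vector with `h(v, v') = 1` and
`h(g^i v, v') = 0` for `1 ≤ i ≤ n−1`. -/
theorem stmt0 {E : Type*} [Field E] (σ : E →+* E) (hσ : ∀ x, σ (σ x) = x)
    {V : Type*} [AddCommGroup V] [Module E V]
    (h : V →ₗ[E] V →ₛₗ[σ] E)
    (h_herm : ∀ x y : V, h y x = σ (h x y))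
    (h_nondeg : ∀ x : V, (∀ y : V, h x y = 0) → x = 0)
    (O : Subring E) (hO : ∀ a ∈ O, σ a ∈ O)
    (n : ℕ) (hn : 0 < n)
    (g : V ≃ₗ[E] V) (hg : ∀ x y : V, h (g x) (g y) = h x y)
    (v : V) (b : Module.Basis (Fin n) E V) (hb : ∀ i : Fin n, b i = (g ^ (i : ℕ)) v)
    (L : Submodule O V)
    (hL : L = Submodule.span O (Set.range fun i : Fin n => (g ^ (i : ℕ)) v))
    (hgL : (⇑g) '' (L : Set V) = (L : Set V)) :
    (∃! v' : V, h v v' = 1 ∧ ∀ i : Fin n, 1 ≤ (i : ℕ) → h ((g ^ (i : ℕ)) v) v' = 0) ∧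
    ∀ v' : V, (h v v' = 1 ∧ ∀ i : Fin n, 1 ≤ (i : ℕ) → h ((g ^ (i : ℕ)) v) v' = 0) →
      (⇑g) '' {x : V | ∀ l ∈ L, h x l ∈ O} = {x : V | ∀ l ∈ L, h x l ∈ O} ∧
      {x : V | ∀ l ∈ L, h x l ∈ O}
        = ↑(Submodule.span O (Set.range fun i : Fin n => (g ^ (i : ℕ)) v')) := by
  classical
  have hσinj : Function.Injective σ := fun s t hst => by rw [← hσ s, ← hσ t, hst]
  set i0 : Fin n := ⟨0, hn⟩ with hi0
  have hbv : b i0 = v := by rw [hb]; simp [hi0]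
  -- the auxiliary linear map `ℓ`
  let ℓ : V →ₗ[E] (Fin n → E) :=
    { toFun := fun y i => σ (h (b i) y)
      map_add' := fun x y => by funext i; simp
      map_smul' := fun c y => by
        funext i
        show σ (h (b i) (c • y)) = c * σ (h (b i) y)
        rw [map_smulₛₗ, smul_eq_mul, map_mul, hσ] }
  have hℓapply : ∀ (y : V) (i : Fin n), ℓ y i = σ (h (b i) y) := fun y i => rfl
  -- vanishing against all basis vectors forces zero
  have hker : ∀ y : V, (∀ i, h (b i) y = 0) → y = 0 := by
    intro y hy
    apply h_nondeg
    intro x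
    rw [h_herm]
    have hx : h x y = 0 := by
      rw [← Module.Basis.sum_repr b x]
      simp only [map_sum, LinearMap.sum_apply, map_smul, LinearMap.smul_apply, hy, smul_zero, Finset.sum_const_zero]
    rw [hx, map_zero]
  have hdet : ∀ w w' : V, (∀ i, h (b i) w = h (b i) w') → w = w' := by
    intro w w' hw
    have : w - w' = 0 := hker _ fun i => by rw [map_sub, hw i, sub_self]
    exact sub_eq_zero.mp this
  -- `ℓ` is bijective
  haveI : FiniteDimensional E V := b.finiteDimensional_of_finite
  have hℓinj : Function.Injective ℓ := by
    intro y z hyz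
    apply hdet
    intro i
    apply hσinj
    rw [← hℓapply, ← hℓapply, hyz]
  have hℓsurj : Function.Surjective ℓ := by
    have hrank : Module.finrank E V = Module.finrank E (Fin n → E) := by
      rw [Module.finrank_eq_card_basis b]; simp
    exact (LinearMap.injective_iff_surjective_of_finrank_eq_finrank hrank).mp hℓinj
  let ℓe : V ≃ₗ[E] (Fin n → E) := LinearEquiv.ofBijective ℓ ⟨hℓinj, hℓsurj⟩
  have hℓe : ∀ (y : V) (i : Fin n), ℓe y i = σ (h (b i) y) := fun y i => rfl
  -- the dual basis
  let b' : Module.Basis (Fin n) E V := (Pi.basisFun E (Fin n)).map ℓe.symm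
  have hb'ℓ : ∀ j : Fin n, ℓe (b' j) = (Pi.single j 1 : Fin n → E) := by
    intro j
    show ℓe (ℓe.symm ((Pi.basisFun E (Fin n)) j)) = (Pi.single j 1 : Fin n → E)
    rw [LinearEquiv.apply_symm_apply, Pi.basisFun_apply]
  have hbb' : ∀ i j : Fin n, h (b i) (b' j) = if i = j then 1 else 0 := by
    intro i j
    apply hσinj
    have h1 : σ (h (b i) (b' j)) = (Pi.single j 1 : Fin n → E) i := by
      rw [← hℓe, ← hb'ℓ j]
    rw [h1, Pi.single_apply]
    rw [show σ (if i = j then (1:E) else 0) = if i = j then σ 1 else σ 0 from apply_ite σ _ _ _]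
    simp [eq_comm]
  -- repr in terms of the form
  have hb'repr : ∀ (x : V) (j : Fin n), b'.repr x j = σ (h (b j) x) := by
    intro x j
    show ((Pi.basisFun E (Fin n)).map ℓe.symm).repr x j = _
    rw [Module.Basis.map_repr]
    simp only [LinearEquiv.trans_apply, LinearEquiv.symm_symm, Pi.basisFun_repr]
    exact hℓe x j
  -- characterization of the defining condition for v'
  have hcond : ∀ w : V,
      (h v w = 1 ∧ ∀ i : Fin n, 1 ≤ (i : ℕ) → h ((g ^ (i : ℕ)) v) w = 0) ↔
      (∀ i : Fin n, h (b i) w = if (i : ℕ) = 0 then 1 else 0) := by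
    intro w
    constructor
    · rintro ⟨h1, h2⟩ i
      by_cases hiz : (i : ℕ) = 0
      · have : i = i0 := Fin.ext (by simp [hiz, hi0])
        rw [this, hbv]
        simpa [hi0] using h1
      · rw [hb i, if_neg hiz]
        exact h2 i (Nat.one_le_iff_ne_zero.mpr hiz)
    · intro hw
      constructor
      · have := hw i0
        rwa [hbv, if_pos rfl] at this
      · intro i hi
        have := hw i
        rwa [hb i, if_neg (by omega)] at this
  -- b' i0 satisfies the condition
  have hb'0cond : ∀ i : Fin n, h (b i) (b' i0) = if (i : ℕ) = 0 then 1 else 0 := by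
    intro i
    rw [hbb' i i0]
    congr 1
    simp [Fin.ext_iff, hi0]
  constructor
  · -- existence and uniqueness
    refine ⟨b' i0, (hcond _).mpr hb'0cond, ?_⟩
    intro y hy
    exact hdet y (b' i0) fun i => by rw [(hcond y).mp hy i, hb'0cond i]
  · -- main statement
    intro v' hv'cond
    have hv' : ∀ i : Fin n, h (b i) v' = if (i : ℕ) = 0 then 1 else 0 := (hcond v').mp hv'cond
    have hv'b : v' = b' i0 := hdet _ _ fun i => by rw [hv' i, hb'0cond i]
    -- stability of the dual lattice under g and g.symm
    have hSg : ∀ x : V, (∀ l ∈ L, h x l ∈ O) → ∀ l ∈ L, h (g x) l ∈ O := by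
      intro x hx l hl
      have : l ∈ (⇑g) '' (L : Set V) := by rw [hgL]; exact hl
      obtain ⟨m, hm, rfl⟩ := this
      rw [hg]
      exact hx m hm
    have hSg' : ∀ x : V, (∀ l ∈ L, h x l ∈ O) → ∀ l ∈ L, h (g.symm x) l ∈ O := by
      intro x hx l hl
      have hgl : g l ∈ L := by
        have : g l ∈ (⇑g) '' (L : Set V) := Set.mem_image_of_mem _ hl
        rwa [hgL] at this
      have : h (g (g.symm x)) (g l) = h (g.symm x) l := hg _ _
      rw [LinearEquiv.apply_symm_apply] at this
      rw [← this]
      exact hx (g l) hgl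
    have himg : (⇑g) '' {x : V | ∀ l ∈ L, h x l ∈ O} = {x : V | ∀ l ∈ L, h x l ∈ O} := by
      ext y
      constructor
      · rintro ⟨x, hx, rfl⟩
        exact hSg x hx
      · intro hy
        exact ⟨g.symm y, hSg' y hy, g.apply_symm_apply y⟩
    refine ⟨himg, ?_⟩
    -- basis vectors of b lie in L
    have hmemL : ∀ i : Fin n, b i ∈ L := by
      intro i
      rw [hL, hb i]
      exact Submodule.subset_span ⟨i, rfl⟩
    -- v' lies in the dual lattice
    have hLv' : ∀ l ∈ L, h l v' ∈ O := by
      intro l hl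
      rw [hL] at hl
      induction hl using Submodule.span_induction with
      | mem x hx =>
        obtain ⟨i, rfl⟩ := hx
        show h ((g ^ (i : ℕ)) v) v' ∈ O
        rw [← hb i, hv' i]
        split <;> simp [O.one_mem, O.zero_mem]
      | zero => rw [map_zero, LinearMap.zero_apply]; exact O.zero_mem
      | add x y _ _ hx hy => rw [map_add, LinearMap.add_apply]; exact O.add_mem hx hy
      | smul a x _ hx =>
        rw [Subring.smul_def, map_smul, LinearMap.smul_apply, smul_eq_mul]
        exact O.mul_mem a.2 hx
    have hv'S : ∀ l ∈ L, h v' l ∈ O := by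
      intro l hl
      rw [h_herm l v']
      exact hO _ (hLv' l hl)
    -- g-powers of v' lie in the dual lattice
    have hgiS : ∀ k : ℕ, ∀ l ∈ L, h ((g ^ k) v') l ∈ O := by
      intro k
      induction k with
      | zero => simpa using hv'S
      | succ k ih =>
        have : (g ^ (k + 1)) v' = g ((g ^ k) v') := by rw [pow_succ']; rfl
        rw [this]
        exact hSg _ ih
    set M := Submodule.span O (Set.range fun i : Fin n => (g ^ (i : ℕ)) v') with hM
    -- M is contained in the dual lattice
    have hMsub : ∀ x ∈ M, ∀ l ∈ L, h x l ∈ O := by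
      intro x hx
      induction hx using Submodule.span_induction with
      | mem y hy =>
        obtain ⟨i, rfl⟩ := hy
        show ∀ l ∈ L, h ((g ^ (i : ℕ)) v') l ∈ O
        exact hgiS i
      | zero => intro l hl; rw [map_zero, LinearMap.zero_apply]; exact O.zero_mem
      | add y z _ _ h1 h2 =>
        intro l hl
        rw [map_add, LinearMap.add_apply]
        exact O.add_mem (h1 l hl) (h2 l hl)
      | smul a y _ h1 =>
        intro l hl
        rw [Subring.smul_def, map_smul, LinearMap.smul_apply, smul_eq_mul]
        exact O.mul_mem a.2 (h1 l hl)
    -- elements of the dual lattice have O-coordinates in b'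
    have hSsub : ∀ x : V, (∀ l ∈ L, h x l ∈ O) → x ∈ Submodule.span O (Set.range ⇑b') := by
      intro x hx
      rw [← Module.Basis.sum_repr b' x]
      refine Submodule.sum_mem _ fun j _ => ?_
      have hj : b'.repr x j ∈ O := by
        rw [hb'repr]
        have h2 : σ (h (b j) x) = h x (b j) := by rw [h_herm x (b j), hσ]
        rw [h2]
        exact hx (b j) (hmemL j)
      have : (⟨b'.repr x j, hj⟩ : O) • b' j = (b'.repr x j) • b' j := Subring.smul_def _ _
      rw [← this]
      exact Submodule.smul_mem _ _ (Submodule.subset_span ⟨j, rfl⟩)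
    -- coordinates of elements of L in b lie in O
    have hLcoord : ∀ l ∈ L, ∀ i : Fin n, b.repr l i ∈ O := by
      intro l hl
      rw [hL] at hl
      induction hl using Submodule.span_induction with
      | mem x hx =>
        intro i
        obtain ⟨k, rfl⟩ := hx
        show b.repr ((g ^ (k : ℕ)) v) i ∈ O
        rw [← hb k, Module.Basis.repr_self, Finsupp.single_apply]
        split <;> simp [O.one_mem, O.zero_mem]
      | zero => intro i; rw [map_zero]; exact O.zero_mem
      | add x y _ _ hx hy => intro i; rw [map_add, Finsupp.add_apply]; exact O.add_mem (hx i) (hy i)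
      | smul a x _ hx =>
        intro i
        rw [Subring.smul_def, map_smul, Finsupp.smul_apply, smul_eq_mul]
        exact O.mul_mem a.2 (hx i)
    -- g.symm v lies in L
    have hvL : v ∈ L := by rw [← hbv]; exact hmemL i0
    have hgsvL : g.symm v ∈ L := by
      have : v ∈ (⇑g) '' (L : Set V) := by rw [hgL]; exact hvL
      obtain ⟨w, hw, hwv⟩ := this
      rw [← hwv, LinearEquiv.symm_apply_apply]
      exact hw
    set c : Fin n → E := fun j => b.repr (g.symm v) j with hc
    have hcO : ∀ j, c j ∈ O := fun j => hLcoord _ hgsvL j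
    -- pairing of g.symm v with the dual basis
    have hsum : ∀ j : Fin n, h (g.symm v) (b' j) = c j := by
      intro j
      conv_lhs => rw [← Module.Basis.sum_repr b (g.symm v)]
      rw [map_sum, LinearMap.sum_apply]
      have : ∀ k : Fin n, h ((b.repr (g.symm v) k) • b k) (b' j)
          = if k = j then b.repr (g.symm v) k else 0 := by
        intro k
        rw [map_smul, LinearMap.smul_apply, smul_eq_mul, hbb']
        split <;> simp
      rw [Finset.sum_congr rfl fun k _ => this k, Finset.sum_ite_eq' Finset.univ j]
      simp [hc]
    -- the recurrence
    have hrec : ∀ (j : ℕ) (hj1 : j + 1 < n),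
        b' ⟨j + 1, hj1⟩ = g (b' ⟨j, Nat.lt_of_succ_lt hj1⟩)
          - σ (c ⟨j, Nat.lt_of_succ_lt hj1⟩) • v' := by
      intro j hj1
      have hj := Nat.lt_of_succ_lt hj1
      apply hdet
      intro i
      have hsm : h (b i) (σ (c ⟨j, hj⟩) • v') = c ⟨j, hj⟩ * (if (i : ℕ) = 0 then 1 else 0) := by
        rw [map_smulₛₗ, smul_eq_mul, hσ, hv' i]
      have hgb : h (b i) (g (b' ⟨j, hj⟩)) =
          (if (i : ℕ) = j + 1 then 1 else 0) + c ⟨j, hj⟩ * (if (i : ℕ) = 0 then 1 else 0) := by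
        rcases Nat.eq_zero_or_pos (i : ℕ) with hiz | hip
        · have hbiv : b i = v := by rw [hb i, hiz, pow_zero]; rfl
          rw [hbiv]
          have h2 : h v (g (b' ⟨j, hj⟩)) = h (g.symm v) (b' ⟨j, hj⟩) := by
            conv_lhs => rw [← g.apply_symm_apply v]
            exact hg _ _
          rw [h2, hsum, if_neg (by omega), if_pos hiz]
          ring
        · obtain ⟨m, hm⟩ : ∃ m, (i : ℕ) = m + 1 := ⟨(i : ℕ) - 1, by omega⟩
          have hmn : m < n := by omega
          have hbi : b i = g (b ⟨m, hmn⟩) := by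
            rw [hb i, hb ⟨m, hmn⟩, hm]
            show (g ^ (m + 1)) v = g ((g ^ m) v)
            rw [pow_succ']; rfl
          rw [hbi, hg, hbb', if_neg (show ¬((i : ℕ) = 0) by omega), mul_zero, add_zero]
          simp only [Fin.mk.injEq, hm]
          congr 1
          rw [eq_iff_iff]
          omega
      rw [map_sub, hgb, hsm, hbb', add_sub_cancel_right]
      congr 1
      simp [Fin.ext_iff, eq_iff_iff]
    -- applying g to O-spans
    have hgspan : ∀ (s : Set V) (x : V), x ∈ Submodule.span O s →
        g x ∈ Submodule.span O ((⇑g) '' s) := by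
      intro s x hx
      induction hx using Submodule.span_induction with
      | mem y hy => exact Submodule.subset_span ⟨y, hy, rfl⟩
      | zero => rw [map_zero]; exact Submodule.zero_mem _
      | add y z _ _ h1 h2 => rw [map_add]; exact Submodule.add_mem _ h1 h2
      | smul a y _ h1 =>
        rw [Subring.smul_def, map_smul]
        have : (a : E) • g y = a • g y := (Subring.smul_def a (g y)).symm
        rw [this]
        exact Submodule.smul_mem _ _ h1
    -- induction: the dual basis vectors lie in spans of powers applied to v'
    have hb'Mj : ∀ (j : ℕ) (hj : j < n),
        b' ⟨j, hj⟩ ∈ Submodule.span O ((fun i : ℕ => (g ^ i) v') '' Set.Iic j) := by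
      intro j
      induction j with
      | zero =>
        intro hj
        have hbeq : b' ⟨0, hj⟩ = v' := by rw [hv'b]
        rw [hbeq]
        refine Submodule.subset_span ⟨0, Set.mem_Iic.mpr le_rfl, ?_⟩
        show (g ^ 0) v' = v'
        rw [pow_zero]; rfl
      | succ j ih =>
        intro hj1
        have hj := Nat.lt_of_succ_lt hj1
        rw [hrec j hj1]
        apply Submodule.sub_mem
        · have h1 := hgspan _ _ (ih hj)
          refine Submodule.span_mono ?_ h1
          rintro _ ⟨_, ⟨i, hi, rfl⟩, rfl⟩
          refine ⟨i + 1, Set.mem_Iic.mpr (Nat.succ_le_succ hi), ?_⟩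
          show (g ^ (i + 1)) v' = g ((g ^ i) v')
          rw [pow_succ']; rfl
        · have hσc : σ (c ⟨j, hj⟩) ∈ O := hO _ (hcO _)
          have heq : (⟨σ (c ⟨j, hj⟩), hσc⟩ : O) • v' = σ (c ⟨j, hj⟩) • v' := Subring.smul_def _ _
          rw [← heq]
          refine Submodule.smul_mem _ _
            (Submodule.subset_span ⟨0, Set.mem_Iic.mpr (Nat.zero_le _), ?_⟩)
          show (g ^ 0) v' = v'
          rw [pow_zero]; rfl
    -- final set equality
    ext x
    simp only [Set.mem_setOf_eq, SetLike.mem_coe]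
    constructor
    · intro hx
      have h1 := hSsub x hx
      have h2 : Set.range ⇑b' ⊆ (M : Set V) := by
        rintro _ ⟨j, rfl⟩
        have h3 := hb'Mj (j : ℕ) j.isLt
        have h4 : b' ⟨(j : ℕ), j.isLt⟩ = b' j := by rw [Fin.eta]
        rw [h4] at h3
        refine Submodule.span_le.mpr ?_ h3
        rintro _ ⟨i, hi, rfl⟩
        exact Submodule.subset_span ⟨⟨i, lt_of_le_of_lt hi j.isLt⟩, rfl⟩
      exact Submodule.span_le.mpr h2 h1
    · intro hx
      exact hMsub x hx
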